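/- Consider the non-Euclidean composite gradient iteration with β ∈ (0,1), and assume: ρ and f are twice continuously differentiable; μ·D²ρ(x)[u,u] ≤ D²h(x)[u,u] ≤ L·D²ρ(x)[u,u] for all x, u ∈ E; β_ρ(x, y') ≥ (σ/(p+1))·‖y' − x‖^{p+1} for all x, y' ∈ E with σ > 0; ‖D²ρ(x)‖ ≤ L̄ for all x ∈ E; z* is a minimizer of φ over s with β_ρ(z_0, z*) > 0; x* is a minimizer of F = f + ψ over s; and there are ε > 0 and D > 0 such that F(z_i) − F(x*) ≥ ε and ‖z_i − x*‖ ≤ D for all i ≥ 0. Set C = L·σ / ((p+1)·(2L − μ)^{p+1}·L̄^{p+1}). Then every index i ≥ 1 at which the stopping inequality ‖∇h(z_i) + g_i‖ ≤ β·‖∇f(z_i) + g_i‖ fails satisfies i ≤ 1 + (2(p+1)/κ)·log( (D/(β·ε))·(2L·β_ρ(z_0, z*)/C)^{1/(p+1)} ); in particular, the stopping inequality holds for every i exceeding this bound. -/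

import Mathlib

open scoped RealInnerProductSpace
open Set


lemma dir_le' {E : Type*} [NormedAddCommGroup E] [InnerProductSpace ℝ E] [CompleteSpace E]
    (u : E → ℝ) (g x v : E) (hu : HasGradientAt u g x) (c : ℝ)
    (hc : ∀ t : ℝ, t ∈ Set.Ioc (0:ℝ) 1 → u (x + t • v) - u x ≤ t * c) :
    ⟪g, v⟫ ≤ c := by
  have hcurve : HasDerivAt (fun t : ℝ => x + t • v) v 0 := by
    simpa using ((hasDerivAt_id (0:ℝ)).smul_const v).const_add x
  have h0 : x + (0:ℝ) • v = x := by simp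
  have hcomp : HasDerivAt (fun t : ℝ => u (x + t • v)) ⟪g, v⟫ 0 := by
    have h1 : HasFDerivAt u (InnerProductSpace.toDual ℝ E g) (x + (0:ℝ) • v) := by
      rw [h0]; exact hu.hasFDerivAt
    have := h1.comp_hasDerivAt (0:ℝ) hcurve
    simpa [InnerProductSpace.toDual_apply_apply, Function.comp_def] using this
  have hslope := hasDerivAt_iff_tendsto_slope.mp hcomp
  have hslope' := hslope.mono_left (nhdsWithin_mono 0 (fun t (ht : t ∈ Ioi (0:ℝ)) =>
    (ne_of_gt ht : t ≠ 0)))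
  refine le_of_tendsto hslope' ?_
  filter_upwards [Ioc_mem_nhdsGT (one_pos)] with t ht
  have ht0 : (0:ℝ) < t := ht.1
  rw [slope_def_field, h0, sub_zero, div_le_iff₀ ht0]
  nlinarith [hc t ht]

lemma dir_ge' {E : Type*} [NormedAddCommGroup E] [InnerProductSpace ℝ E] [CompleteSpace E]
    (u : E → ℝ) (g x v : E) (hu : HasGradientAt u g x) (c : ℝ)
    (hc : ∀ t : ℝ, t ∈ Set.Ioc (0:ℝ) 1 → t * c ≤ u (x + t • v) - u x) :
    c ≤ ⟪g, v⟫ := by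
  have hneg : HasGradientAt (fun y => -u y) (-g) x := by
    have := hu.hasFDerivAt.neg
    rw [hasFDerivAt_iff_hasGradientAt] at this
    convert this using 1
    · rfl
    simp
  have := dir_le' (fun y => -u y) (-g) x v hneg (-c) (fun t ht => by
    have := hc t ht; linarith [hc t ht])
  rw [inner_neg_left] at this
  linarith

lemma grad_lip' {E : Type*} [NormedAddCommGroup E] [InnerProductSpace ℝ E] [CompleteSpace E]
    (ρ : E → ℝ) (ρ' : E → E) (hρ' : ∀ x, HasGradientAt ρ (ρ' x) x)
    (hρC2 : ContDiff ℝ 2 ρ) (Lbar : ℝ)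
    (hLbar : ∀ x, ‖iteratedFDeriv ℝ 2 ρ x‖ ≤ Lbar) :
    ∀ a b : E, ‖ρ' a - ρ' b‖ ≤ Lbar * ‖a - b‖ := by
  intro a b
  have heq : ∀ x, InnerProductSpace.toDual ℝ E (ρ' x) = fderiv ℝ ρ x :=
    fun x => ((hρ' x).hasFDerivAt).fderiv.symm
  have hnorm : ‖ρ' a - ρ' b‖ = ‖fderiv ℝ ρ a - fderiv ℝ ρ b‖ := by
    rw [← heq, ← heq, ← map_sub, LinearIsometryEquiv.norm_map]
  rw [hnorm]
  have hdiff : ∀ x ∈ (univ : Set E), DifferentiableAt ℝ (fderiv ℝ ρ) x := by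
    intro x _
    exact ((hρC2.fderiv_right (m := 1) (by norm_num)).differentiable (by norm_num)) x
  have hbound : ∀ x ∈ (univ : Set E), ‖fderiv ℝ (fderiv ℝ ρ) x‖ ≤ Lbar := by
    intro x _
    have e1 : ‖fderiv ℝ (fderiv ℝ ρ) x‖ = ‖iteratedFDeriv ℝ 0 (fderiv ℝ (fderiv ℝ ρ)) x‖ :=
      by rw [norm_iteratedFDeriv_zero]
    have e2 : ‖iteratedFDeriv ℝ 0 (fderiv ℝ (fderiv ℝ ρ)) x‖
        = ‖iteratedFDeriv ℝ 1 (fderiv ℝ ρ) x‖ :=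
      norm_iteratedFDeriv_fderiv
    have e3 : ‖iteratedFDeriv ℝ 1 (fderiv ℝ ρ) x‖ = ‖iteratedFDeriv ℝ 2 ρ x‖ :=
      norm_iteratedFDeriv_fderiv
    rw [e1, e2, e3]; exact hLbar x
  exact convex_univ.norm_image_sub_le_of_norm_fderiv_le hdiff hbound (mem_univ b) (mem_univ a)

lemma line_deriv' {E : Type*} [NormedAddCommGroup E] [InnerProductSpace ℝ E] [CompleteSpace E]
    (ρ : E → ℝ) (ρ' : E → E) (hρ' : ∀ x, HasGradientAt ρ (ρ' x) x)
    (x v : E) (t : ℝ) :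
    HasDerivAt (fun t : ℝ => ρ (x + t • v)) ⟪ρ' (x + t • v), v⟫ t := by
  have hcurve : HasDerivAt (fun t : ℝ => x + t • v) v t := by
    simpa using ((hasDerivAt_id t).smul_const v).const_add x
  have h1 := (hρ' (x + t • v)).hasFDerivAt.comp_hasDerivAt t hcurve
  simpa [InnerProductSpace.toDual_apply_apply, Function.comp_def] using h1

lemma breg_quad' {E : Type*} [NormedAddCommGroup E] [InnerProductSpace ℝ E] [CompleteSpace E]
    (ρ : E → ℝ) (ρ' : E → E) (hρ' : ∀ x, HasGradientAt ρ (ρ' x) x)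
    (Lbar : ℝ) (hlip : ∀ a b : E, ‖ρ' a - ρ' b‖ ≤ Lbar * ‖a - b‖)
    (x w : E) : ρ w - ρ x - ⟪ρ' x, w - x⟫ ≤ Lbar / 2 * ‖w - x‖ ^ 2 := by
  set v := w - x with hv
  set G : ℝ → ℝ := fun t => Lbar / 2 * ‖v‖ ^ 2 * t ^ 2 - (ρ (x + t • v) - ρ x - t * ⟪ρ' x, v⟫)
    with hG
  have hG' : ∀ t : ℝ, HasDerivAt G
      (Lbar * ‖v‖ ^ 2 * t - (⟪ρ' (x + t • v), v⟫ - ⟪ρ' x, v⟫)) t := by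
    intro t
    have h1 : HasDerivAt (fun t : ℝ => Lbar / 2 * ‖v‖ ^ 2 * t ^ 2) (Lbar * ‖v‖ ^ 2 * t) t := by
      have := ((hasDerivAt_pow 2 t).const_mul (Lbar / 2 * ‖v‖ ^ 2))
      refine this.congr_deriv ?_
      ring
    have h2 : HasDerivAt (fun t : ℝ => ρ (x + t • v) - ρ x - t * ⟪ρ' x, v⟫)
        (⟪ρ' (x + t • v), v⟫ - ⟪ρ' x, v⟫) t := by
      have := ((line_deriv' ρ ρ' hρ' x v t).sub_const (ρ x)).sub
        ((hasDerivAt_id t).mul_const ⟪ρ' x, v⟫)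
      simpa [Pi.sub_def] using this
    exact h1.sub h2
  have hmono : MonotoneOn G (Icc (0:ℝ) 1) := by
    apply monotoneOn_of_deriv_nonneg (convex_Icc 0 1)
    · exact (Differentiable.continuous (fun t => (hG' t).differentiableAt)).continuousOn
    · exact (Differentiable.differentiableOn (fun t => (hG' t).differentiableAt))
    · intro t ht
      rw [interior_Icc] at ht
      rw [(hG' t).deriv]
      have hb : ⟪ρ' (x + t • v) - ρ' x, v⟫ ≤ Lbar * ‖v‖ ^ 2 * t := by
        calc ⟪ρ' (x + t • v) - ρ' x, v⟫ ≤ ‖ρ' (x + t • v) - ρ' x‖ * ‖v‖ :=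
              real_inner_le_norm _ _
          _ ≤ (Lbar * ‖x + t • v - x‖) * ‖v‖ := by
              have := hlip (x + t • v) x
              nlinarith [norm_nonneg v]
          _ = Lbar * ‖v‖ ^ 2 * t := by
              have : ‖x + t • v - x‖ = t * ‖v‖ := by
                rw [add_sub_cancel_left, norm_smul, Real.norm_eq_abs,
                  abs_of_pos ht.1]
              rw [this]; ring
      rw [inner_sub_left] at hb
      linarith
  have h01 := hmono (left_mem_Icc.mpr zero_le_one) (right_mem_Icc.mpr zero_le_one) zero_le_one
  have e0 : G 0 = 0 := by simp [hG]
  have e1 : G 1 = Lbar / 2 * ‖v‖ ^ 2 - (ρ w - ρ x - ⟪ρ' x, v⟫) := by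
    simp only [hG, one_smul, one_pow, one_mul, hv, add_sub_cancel]
    ring
  rw [e0, e1] at h01
  linarith


set_option maxHeartbeats 4000000 in
theorem stmt12 {E : Type*} [NormedAddCommGroup E] [InnerProductSpace ℝ E]
    [FiniteDimensional ℝ E]
    (s : Set E) (hs : s.Nonempty) (hsconv : Convex ℝ s)
    (ψ : E → ℝ) (hψ : ConvexOn ℝ s ψ)
    (f : E → ℝ) (f' : E → E) (hf' : ∀ x, HasGradientAt f (f' x) x)
    (hfconv : ConvexOn ℝ Set.univ f)
    (p : ℕ) (hp : 1 ≤ p)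
    (y : E) (hy : y ∈ s) (H : ℝ) (hH : 0 < H)
    (h : E → ℝ) (hhdef : ∀ z, h z = f z + H * (‖z - y‖ ^ (p + 1) / (p + 1)))
    (h' : E → E) (hh' : ∀ x, HasGradientAt h (h' x) x)
    (φ : E → ℝ) (hφ : ∀ z, φ z = h z + ψ z)
    (ρ : E → ℝ) (ρ' : E → E) (hρ' : ∀ x, HasGradientAt ρ (ρ' x) x)
    (hρconv : ConvexOn ℝ Set.univ ρ)
    (Br : E → E → ℝ) (hBr : ∀ x w, Br x w = ρ w - ρ x - ⟪ρ' x, w - x⟫)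
    (L μ : ℝ) (hμ : 0 < μ) (hμL : μ ≤ L)
    (hrel : ∀ x w, μ * Br x w ≤ h w - h x - ⟪h' x, w - x⟫ ∧
        h w - h x - ⟪h' x, w - x⟫ ≤ L * Br x w)
    (z : ℕ → E) (hz0 : z 0 = y)
    (hzs : ∀ i, z (i + 1) ∈ s)
    (hzmin : ∀ i : ℕ, ∀ w ∈ s,
        ⟪h' (z i), z (i + 1) - z i⟫ + ψ (z (i + 1)) + 2 * L * Br (z i) (z (i + 1))
          ≤ ⟪h' (z i), w - z i⟫ + ψ w + 2 * L * Br (z i) w)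
    (hρC2 : ContDiff ℝ 2 ρ) (hfC2 : ContDiff ℝ 2 f)
    (hsand : ∀ x u : E,
        μ * iteratedFDeriv ℝ 2 ρ x (fun _ => u) ≤ iteratedFDeriv ℝ 2 h x (fun _ => u) ∧
        iteratedFDeriv ℝ 2 h x (fun _ => u) ≤ L * iteratedFDeriv ℝ 2 ρ x (fun _ => u))
    (σ : ℝ) (hσ : 0 < σ)
    (hunif : ∀ x w : E, Br x w ≥ σ / (p + 1) * ‖w - x‖ ^ (p + 1))
    (Lbar : ℝ) (hLbar : ∀ x : E, ‖iteratedFDeriv ℝ 2 ρ x‖ ≤ Lbar)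
    (gs : ℕ → E)
    (hgs : ∀ i : ℕ, gs (i + 1) = (2 * L) • (ρ' (z i) - ρ' (z (i + 1))) - h' (z i))
    (β : ℝ) (hβ : β ∈ Set.Ioo (0 : ℝ) 1)
    (zstar : E) (hzstar : zstar ∈ s) (hzstarmin : ∀ w ∈ s, φ zstar ≤ φ w)
    (hBrpos : 0 < Br (z 0) zstar)
    (xstar : E) (hxstar : xstar ∈ s)
    (hxstarmin : ∀ w ∈ s, f xstar + ψ xstar ≤ f w + ψ w)
    (ε : ℝ) (hε : 0 < ε) (D : ℝ) (hD : 0 < D)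
    (hfar : ∀ i : ℕ, ε ≤ f (z i) + ψ (z i) - (f xstar + ψ xstar))
    (hbound : ∀ i : ℕ, ‖z i - xstar‖ ≤ D)
    (C : ℝ) (hC : C = L * σ / ((p + 1) * (2 * L - μ) ^ (p + 1) * Lbar ^ (p + 1))) :
    ∀ i : ℕ, 1 ≤ i →
      ¬ (‖h' (z i) + gs i‖ ≤ β * ‖f' (z i) + gs i‖) →
      (i : ℝ) ≤ 1 + 2 * ((p : ℝ) + 1) / (μ / L) *
        Real.log (D / (β * ε) * (2 * L * Br (z 0) zstar / C) ^ (1 / ((p : ℝ) + 1))) := by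
  obtain ⟨hβ0, hβ1⟩ := hβ
  have hL : 0 < L := lt_of_lt_of_le hμ hμL
  have hBrnn : ∀ x w : E, 0 ≤ Br x w := fun x w =>
    le_trans (mul_nonneg (div_nonneg hσ.le (by positivity)) (by positivity)) (hunif x w)
  have hzmem : ∀ i, z i ∈ s := by
    intro i
    cases i with
    | zero => rw [hz0]; exact hy
    | succ n => exact hzs n
  have hρlip := grad_lip' ρ ρ' hρ' hρC2 Lbar hLbar
  have hBrq : ∀ x w : E, Br x w ≤ Lbar / 2 * ‖w - x‖ ^ 2 := fun x w => by
    rw [hBr]; exact breg_quad' ρ ρ' hρ' Lbar hρlip x w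
  have hLbar0 : 0 < Lbar := by
    by_contra hcon
    push_neg at hcon
    have h1 := hBrq (z 0) zstar
    nlinarith [hBrpos, sq_nonneg ‖zstar - z 0‖]
  set M : ℝ := (2 * L - μ) * Lbar with hMdef
  have hM : 0 < M := mul_pos (by linarith) hLbar0
  set q' : E → E := fun x => (2 * L) • ρ' x - h' x with hq'
  set Q : E → ℝ := fun x => 2 * L * ρ x - h x with hQ
  have hQB : ∀ a w : E, Q w - Q a - ⟪q' a, w - a⟫
      = 2 * L * Br a w - (h w - h a - ⟪h' a, w - a⟫) := by
    intro a w
    simp only [hQ, hq', hBr, inner_sub_left, real_inner_smul_left]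
    ring
  have hBq0 : ∀ a w : E, 0 ≤ Q w - Q a - ⟪q' a, w - a⟫ := by
    intro a w
    rw [hQB]
    have h1 := (hrel a w).2
    have h2 := hBrnn a w
    nlinarith [mul_nonneg hL.le h2]
  have hBqM : ∀ a w : E, Q w - Q a - ⟪q' a, w - a⟫ ≤ M / 2 * ‖w - a‖ ^ 2 := by
    intro a w
    rw [hQB]
    have h1 := (hrel a w).1
    have h2 := hBrq a w
    have h3 := mul_le_mul_of_nonneg_left h2 (by linarith : (0:ℝ) ≤ 2 * L - μ)
    nlinarith [hBrnn a w]
  have hkey : ∀ a b : E, ‖q' b - q' a‖ ^ 2 ≤ 2 * M * (Q b - Q a - ⟪q' a, b - a⟫) := by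
    intro a b
    set d : E := q' b - q' a with hd
    set u : E := b - (M⁻¹) • d with hu
    have h1 := hBq0 a u
    have h2 := hBqM b u
    have hub : u - b = -(M⁻¹ • d) := by rw [hu]; abel
    have e1 : ⟪q' b, u - b⟫ = -(M⁻¹ * ⟪q' b, d⟫) := by
      rw [hub, inner_neg_right, real_inner_smul_right]
    have e2 : ‖u - b‖ ^ 2 = M⁻¹ ^ 2 * ‖d‖ ^ 2 := by
      rw [hub, norm_neg, norm_smul, Real.norm_eq_abs, abs_of_pos (inv_pos.mpr hM), mul_pow]
    have e3 : ⟪q' a, u - a⟫ = ⟪q' a, b - a⟫ - M⁻¹ * ⟪q' a, d⟫ := by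
      have huae : u - a = (b - a) - M⁻¹ • d := by rw [hu]; abel
      rw [huae, inner_sub_right, real_inner_smul_right]
    have e4 : ⟪q' b, d⟫ - ⟪q' a, d⟫ = ‖d‖ ^ 2 := by
      rw [← inner_sub_left, ← hd, real_inner_self_eq_norm_sq]
    rw [e1, e2] at h2
    rw [e3] at h1
    have hMi : M * M⁻¹ = 1 := mul_inv_cancel₀ (ne_of_gt hM)
    have hMM : M / 2 * (M⁻¹ ^ 2 * ‖d‖ ^ 2) = M⁻¹ * ‖d‖ ^ 2 / 2 := by
      field_simp
    rw [hMM] at h2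
    have e4' : M⁻¹ * ⟪q' b, d⟫ - M⁻¹ * ⟪q' a, d⟫ = M⁻¹ * ‖d‖ ^ 2 := by
      rw [← mul_sub, e4]
    have h5 : M⁻¹ * ‖d‖ ^ 2 / 2 ≤ Q b - Q a - ⟪q' a, b - a⟫ := by linarith
    have h7 : 2 * M * (M⁻¹ * ‖d‖ ^ 2 / 2) = ‖d‖ ^ 2 := by
      field_simp
    have h8 := mul_le_mul_of_nonneg_left h5 (by linarith : (0:ℝ) ≤ 2 * M)
    rw [h7] at h8
    exact h8
  have hcoco : ∀ a b : E, ‖q' b - q' a‖ ≤ M * ‖b - a‖ := by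
    intro a b
    have h1 := hkey a b
    have h2 := hkey b a
    have e : (Q b - Q a - ⟪q' a, b - a⟫) + (Q a - Q b - ⟪q' b, a - b⟫)
        = ⟪q' b - q' a, b - a⟫ := by
      simp only [inner_sub_left, inner_sub_right, real_inner_smul_left]
      ring
    have hrev : ‖q' a - q' b‖ = ‖q' b - q' a‖ := norm_sub_rev _ _
    rw [hrev] at h2
    have e2M : 2 * M * (Q b - Q a - ⟪q' a, b - a⟫) + 2 * M * (Q a - Q b - ⟪q' b, a - b⟫)
        = 2 * M * ⟪q' b - q' a, b - a⟫ := by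
      rw [← mul_add, e]
    have hcs := real_inner_le_norm (q' b - q' a) (b - a)
    have hcsM := mul_le_mul_of_nonneg_left hcs (by linarith : (0:ℝ) ≤ 2 * M)
    have h6 : 2 * ‖q' b - q' a‖ ^ 2 ≤ 2 * M * (‖q' b - q' a‖ * ‖b - a‖) := by linarith
    rcases eq_or_lt_of_le (norm_nonneg (q' b - q' a)) with h0 | h0
    · rw [← h0]; positivity
    · nlinarith [h6, h0]
  have hstrong : ∀ i : ℕ, ∀ w ∈ s,
      ⟪h' (z i), z (i+1) - z i⟫ + ψ (z (i+1)) + 2*L*Br (z i) (z (i+1)) + 2*L*Br (z (i+1)) w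
        ≤ ⟪h' (z i), w - z i⟫ + ψ w + 2*L*Br (z i) w := by
    intro i w hw
    have h2L : (0:ℝ) < 2 * L := by linarith
    set x := z (i+1) with hx
    set v := w - x with hv
    clear_value x v
    have hA : (ψ x - ψ w - ⟪h' (z i), v⟫ + 2*L*⟪ρ' (z i), v⟫) / (2*L) ≤ ⟪ρ' x, v⟫ := by
      refine dir_ge' ρ (ρ' x) x v (hρ' x) _ ?_
      intro t ht
      have hpt : x + t • v = (1 - t) • x + t • w := by rw [hv]; module
      have hwt : x + t • v ∈ s := by
        rw [hpt, hx]
        exact hsconv (hzmem (i+1)) hw (by linarith [ht.2]) ht.1.le (by ring)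
      have hmin := hzmin i (x + t • v) hwt
      rw [← hx] at hmin
      have hψc : ψ (x + t • v) ≤ (1 - t) * ψ x + t * ψ w := by
        rw [hpt, hx]
        exact hψ.2 (hzmem (i+1)) hw (by linarith [ht.2]) ht.1.le (by ring)
      have hBrt : Br (z i) (x + t • v)
          = Br (z i) x + (ρ (x + t • v) - ρ x) - t * ⟪ρ' (z i), v⟫ := by
        simp only [hBr]
        rw [show x + t • v - z i = (x - z i) + t • v by abel]
        rw [inner_add_right, real_inner_smul_right]
        ring
      have hinner : ⟪h' (z i), x + t • v - z i⟫
          = ⟪h' (z i), x - z i⟫ + t * ⟪h' (z i), v⟫ := by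
        rw [show x + t • v - z i = (x - z i) + t • v by abel]
        rw [inner_add_right, real_inner_smul_right]
      rw [hBrt, hinner] at hmin
      rw [mul_div_assoc', div_le_iff₀ h2L]
      ring_nf at hmin hψc ⊢
      linarith
    have hA' : ψ x - ψ w - ⟪h' (z i), v⟫ + 2*L*⟪ρ' (z i), v⟫ ≤ 2*L*⟪ρ' x, v⟫ := by
      have h9 := mul_le_mul_of_nonneg_left hA h2L.le
      have he : 2*L*((ψ x - ψ w - ⟪h' (z i), v⟫ + 2*L*⟪ρ' (z i), v⟫)/(2*L))
          = ψ x - ψ w - ⟪h' (z i), v⟫ + 2*L*⟪ρ' (z i), v⟫ := by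
        field_simp
      rw [he] at h9
      exact h9
    have hs1 : ⟪h' (z i), w - z i⟫ = ⟪h' (z i), x - z i⟫ + ⟪h' (z i), v⟫ := by
      rw [← inner_add_right]
      congr 1
      rw [hv]; abel
    have hs2 : ⟪ρ' (z i), w - z i⟫ = ⟪ρ' (z i), x - z i⟫ + ⟪ρ' (z i), v⟫ := by
      rw [← inner_add_right]
      congr 1
      rw [hv]; abel
    simp only [hBr]
    rw [← hv, hs1, hs2]
    ring_nf at hA' ⊢
    linarith
  have hsubgrad : ∀ i : ℕ, ∀ w ∈ s,
      ψ (z (i+1)) + ⟪gs (i+1), w - z (i+1)⟫ ≤ ψ w := by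
    intro i w hw
    have hst := hstrong i w hw
    rw [hgs i]
    have hsp : ∀ a : E, ⟪a, w - z i⟫ = ⟪a, z (i+1) - z i⟫ + ⟪a, w - z (i+1)⟫ := fun a => by
      rw [← inner_add_right]
      congr 1
      abel
    simp only [hBr] at hst
    rw [hsp (h' (z i)), hsp (ρ' (z i))] at hst
    simp only [inner_sub_left, real_inner_smul_left]
    have hBnn := hBrnn (z (i+1)) w
    ring_nf at hst ⊢
    linarith
  have hdescent : ∀ i : ℕ, ∀ w ∈ s,
      φ (z (i+1)) + 2*L*Br (z (i+1)) w + L*Br (z i) (z (i+1)) ≤ φ w + (2*L-μ)*Br (z i) w := by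
    intro i w hw
    have hst := hstrong i w hw
    have h1 := (hrel (z i) (z (i+1))).2
    have h2 := (hrel (z i) w).1
    simp only [hφ]
    ring_nf at hst h1 h2 ⊢
    linarith
  have hr0 : (0:ℝ) < 1 - μ/(2*L) := by
    have : μ/(2*L) < 1 := by rw [div_lt_one (by linarith)]; linarith
    linarith
  have hr1 : 1 - μ/(2*L) < 1 := by
    have : 0 < μ/(2*L) := by positivity
    linarith
  have hV : ∀ i : ℕ, 2*L*Br (z i) zstar ≤ (1 - μ/(2*L))^i * (2*L*Br (z 0) zstar) := by
    intro i
    induction i with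
    | zero => simp
    | succ n ih =>
      have hd := hdescent n zstar hzstar
      have hφs := hzstarmin (z (n+1)) (hzmem (n+1))
      have hB := mul_nonneg hL.le (hBrnn (z n) (z (n+1)))
      have hr2 : (2*L - μ) * Br (z n) zstar = (1 - μ/(2*L)) * (2*L*Br (z n) zstar) := by
        field_simp
      have step : 2*L*Br (z (n+1)) zstar ≤ (1 - μ/(2*L)) * (2*L*Br (z n) zstar) := by
        rw [← hr2]
        linarith
      calc 2*L*Br (z (n+1)) zstar ≤ (1 - μ/(2*L)) * (2*L*Br (z n) zstar) := step
        _ ≤ (1 - μ/(2*L)) * ((1 - μ/(2*L))^n * (2*L*Br (z 0) zstar)) :=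
            mul_le_mul_of_nonneg_left ih hr0.le
        _ = (1 - μ/(2*L))^(n+1) * (2*L*Br (z 0) zstar) := by ring
  have hstep : ∀ i : ℕ, L * Br (z i) (z (i+1)) ≤ (1 - μ/(2*L))^i * (2*L*Br (z 0) zstar) := by
    intro i
    have hd := hdescent i zstar hzstar
    have hφs := hzstarmin (z (i+1)) (hzmem (i+1))
    have hB2 := mul_nonneg (by linarith : (0:ℝ) ≤ 2*L) (hBrnn (z (i+1)) zstar)
    have hr2 : (2*L - μ) * Br (z i) zstar = (1 - μ/(2*L)) * (2*L*Br (z i) zstar) := by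
      field_simp
    have h1 : L*Br (z i) (z (i+1)) ≤ (1 - μ/(2*L)) * (2*L*Br (z i) zstar) := by
      rw [← hr2]
      linarith
    have h2 := mul_le_mul_of_nonneg_left (hV i) hr0.le
    have hV0nn : 0 ≤ (1 - μ/(2*L))^i * (2*L*Br (z 0) zstar) :=
      mul_nonneg (pow_nonneg hr0.le i) (mul_nonneg (by linarith) (hBrnn _ _))
    calc L*Br (z i) (z (i+1)) ≤ (1 - μ/(2*L)) * ((1 - μ/(2*L))^i * (2*L*Br (z 0) zstar)) :=
          le_trans h1 h2
      _ ≤ 1 * ((1 - μ/(2*L))^i * (2*L*Br (z 0) zstar)) :=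
          mul_le_mul_of_nonneg_right (by linarith) hV0nn
      _ = (1 - μ/(2*L))^i * (2*L*Br (z 0) zstar) := one_mul _
  intro i hi hfail
  obtain ⟨j, rfl⟩ : ∃ j, i = j + 1 := ⟨i - 1, (Nat.succ_pred_eq_of_pos hi).symm⟩
  push_neg at hfail
  have hfx : ⟪f' (z (j+1)), xstar - z (j+1)⟫ ≤ f xstar - f (z (j+1)) := by
    refine dir_le' f (f' (z (j+1))) (z (j+1)) (xstar - z (j+1)) (hf' _) _ ?_
    intro t ht
    have hpt : z (j+1) + t • (xstar - z (j+1)) = (1-t) • z (j+1) + t • xstar := by module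
    have hcv := hfconv.2 (mem_univ (z (j+1))) (mem_univ xstar)
      (by linarith [ht.2] : (0:ℝ) ≤ 1 - t) ht.1.le (by ring)
    rw [hpt]
    simp only [smul_eq_mul] at hcv
    nlinarith [hcv]
  have hsub := hsubgrad j xstar hxstar
  have hFui : ε ≤ ⟪f' (z (j+1)) + gs (j+1), z (j+1) - xstar⟫ := by
    have hfar' := hfar (j+1)
    have hrw : ⟪f' (z (j+1)) + gs (j+1), z (j+1) - xstar⟫
        = -(⟪f' (z (j+1)), xstar - z (j+1)⟫ + ⟪gs (j+1), xstar - z (j+1)⟫) := by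
      rw [inner_add_left, show z (j+1) - xstar = -(xstar - z (j+1)) by abel,
        inner_neg_right, inner_neg_right]
      ring
    rw [hrw]
    linarith
  have hnormlb : ε ≤ ‖f' (z (j+1)) + gs (j+1)‖ * D := by
    have hcs := real_inner_le_norm (f' (z (j+1)) + gs (j+1)) (z (j+1) - xstar)
    have hb := hbound (j+1)
    nlinarith [norm_nonneg (f' (z (j+1)) + gs (j+1)), norm_nonneg (z (j+1) - xstar)]
  have hup : ‖h' (z (j+1)) + gs (j+1)‖ ≤ M * ‖z (j+1) - z j‖ := by
    have hc := hcoco (z (j+1)) (z j)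
    have he : q' (z j) - q' (z (j+1)) = h' (z (j+1)) + gs (j+1) := by
      rw [hgs j]
      simp only [hq']
      rw [smul_sub]
      abel
    rw [← he]
    calc ‖q' (z j) - q' (z (j+1))‖ ≤ M * ‖z j - z (j+1)‖ := hc
      _ = M * ‖z (j+1) - z j‖ := by rw [norm_sub_rev]
  have hΔ : β * ε / D < M * ‖z (j+1) - z j‖ := by
    rw [div_lt_iff₀ hD]
    have h1 := mul_le_mul_of_nonneg_left hnormlb hβ0.le
    have h2 := mul_lt_mul_of_pos_right hfail hD
    have h3 := mul_le_mul_of_nonneg_right hup hD.le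
    nlinarith
  have hΔlow : β * ε / (D * M) < ‖z (j+1) - z j‖ := by
    rw [div_lt_iff₀ (by positivity)]
    rw [div_lt_iff₀ hD] at hΔ
    nlinarith
  have hbase : 0 < β * ε / (D * M) := by positivity
  have hpows : (β*ε/(D*M))^(p+1) ≤ ‖z (j+1) - z j‖^(p+1) :=
    pow_le_pow_left₀ hbase.le hΔlow.le _
  have hBru := hunif (z j) (z (j+1))
  have hσp : 0 < σ / ((p:ℝ)+1) := by positivity
  have hBrchain : L * (σ/((p:ℝ)+1) * (β*ε/(D*M))^(p+1)) ≤ L * Br (z j) (z (j+1)) := by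
    have h1 : σ/((p:ℝ)+1) * (β*ε/(D*M))^(p+1) ≤ σ/((p:ℝ)+1) * ‖z (j+1) - z j‖^(p+1) :=
      mul_le_mul_of_nonneg_left hpows hσp.le
    exact mul_le_mul_of_nonneg_left (le_trans h1 hBru) hL.le
  set X : ℝ := C * (β*ε/D)^(p+1) with hXdef
  have hLμ : (0:ℝ) < 2*L - μ := by linarith
  have hCpos : 0 < C := by
    rw [hC]
    positivity
  have hXpos : 0 < X := by rw [hXdef]; positivity
  have hCid : X = L * (σ/((p:ℝ)+1) * (β*ε/(D*M))^(p+1)) := by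
    have hMpow : (β*ε/(D*M))^(p+1) = (β*ε/D)^(p+1) / ((2*L-μ)^(p+1) * Lbar^(p+1)) := by
      rw [hMdef, ← div_div, div_pow, mul_pow]
    have hB : (2*L-μ)^(p+1) ≠ 0 := by positivity
    have hCc : Lbar^(p+1) ≠ 0 := by positivity
    have hp1' : ((p:ℝ)+1) ≠ 0 := by positivity
    rw [hXdef, hC, hMpow]
    field_simp
  have hV0pos : 0 < 2*L*Br (z 0) zstar := by
    have : (0:ℝ) < 2*L := by linarith
    exact mul_pos this hBrpos
  have hfinal : X ≤ (1 - μ/(2*L))^j * (2*L*Br (z 0) zstar) := by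
    rw [hCid]
    exact le_trans hBrchain (hstep j)
  have hq2 : X / (2*L*Br (z 0) zstar) ≤ (1 - μ/(2*L))^j := by
    rw [div_le_iff₀ hV0pos]
    exact hfinal
  have hlog1 : Real.log (X / (2*L*Br (z 0) zstar)) ≤ (j:ℝ) * Real.log (1 - μ/(2*L)) := by
    have hmono := Real.log_le_log (by positivity) hq2
    rwa [Real.log_pow] at hmono
  have hlogr : Real.log (1 - μ/(2*L)) ≤ -(μ/(2*L)) := by
    have := Real.log_le_sub_one_of_pos hr0
    linarith
  have hjb : (j:ℝ) * (μ/(2*L)) ≤ Real.log (2*L*Br (z 0) zstar) - Real.log X := by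
    rw [Real.log_div (ne_of_gt hXpos) (ne_of_gt hV0pos)] at hlog1
    have h9 : (j:ℝ) * Real.log (1 - μ/(2*L)) ≤ (j:ℝ) * (-(μ/(2*L))) :=
      mul_le_mul_of_nonneg_left hlogr (Nat.cast_nonneg j)
    nlinarith
  have hp1 : ((p:ℝ)+1) ≠ 0 := by positivity
  have hVC : 0 < 2*L*Br (z 0) zstar / C := div_pos hV0pos hCpos
  have hT : ((p:ℝ)+1) * Real.log (D/(β*ε) * (2*L*Br (z 0) zstar / C) ^ (1/((p:ℝ)+1)))
      = Real.log (2*L*Br (z 0) zstar) - Real.log X := by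
    rw [Real.log_mul (by positivity : D/(β*ε) ≠ 0)
      (ne_of_gt (Real.rpow_pos_of_pos hVC _))]
    rw [Real.log_rpow hVC]
    rw [hXdef]
    rw [Real.log_mul (ne_of_gt hCpos) (by positivity : (β*ε/D)^(p+1) ≠ 0)]
    rw [Real.log_pow]
    rw [Real.log_div (ne_of_gt hV0pos) (ne_of_gt hCpos)]
    have e2 : D/(β*ε) = (β*ε/D)⁻¹ := by
      rw [inv_div]
    rw [e2, Real.log_inv]
    push_cast
    field_simp
    ring
  have hfrac : 2*((p:ℝ)+1)/(μ/L)
        * Real.log (D/(β*ε) * (2*L*Br (z 0) zstar / C) ^ (1/((p:ℝ)+1)))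
      = (2*L/μ) * (((p:ℝ)+1)
        * Real.log (D/(β*ε) * (2*L*Br (z 0) zstar / C) ^ (1/((p:ℝ)+1)))) := by
    field_simp
  have hmul := mul_le_mul_of_nonneg_left hjb (by positivity : (0:ℝ) ≤ 2*L/μ)
  have hsimp : (2*L/μ) * ((j:ℝ) * (μ/(2*L))) = (j:ℝ) := by
    field_simp
  rw [hsimp] at hmul
  push_cast
  rw [hfrac, hT]
  linarith
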